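/- arXiv:0709.3741 — 3 statements merged into one kernel-verified Lean document; each statement's English description precedes it below -/
import Mathlib

section
/- Let A be a bounded unital complex *-algebra. Then A is C*-representable if and only if rad(A) = {0}. -/
open scoped ENNReal NNReal

section CommonDefs

variable (A : Type) [Ring A] [Algebra ℂ A] [StarRing A] [StarModule ℂ A]

/-- `A` is C*-representable: there is an injective `*`-representation of `A` by bounded
operators on some complex Hilbert space. -/
def CStarRepresentable : Prop :=
  ∃ (H : Type) (_ : NormedAddCommGroup H) (_ : InnerProductSpace ℂ H) (_ : CompleteSpace H)
    (π : A →⋆ₐ[ℂ] (H →L[ℂ] H)), Function.Injective π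

/-- `A` is a bounded `*`-algebra: every `x` satisfies `x x* + x₁x₁* + ⋯ + x_m x_m* = α•1`
for some real `α` and finitely many `xᵢ ∈ A`. -/
def IsBoundedStarAlgebra : Prop :=
  ∀ x : A, ∃ (α : ℝ) (m : ℕ) (f : Fin m → A),
    x * star x + ∑ i, f i * star (f i) = (α : ℂ) • (1 : A)

/-- `A` is completely positive: `x₁*x₁ + ⋯ + x_n*x_n = 0` only has the zero solution. -/
def CompletelyPositive : Prop :=
  ∀ (n : ℕ), 0 < n → ∀ f : Fin n → A, ∑ i, star (f i) * f i = 0 → ∀ i, f i = 0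

/-- `x` belongs to the `*`-radical of `A`: every `*`-representation kills `x`. -/
def MemStarRadical (x : A) : Prop :=
  ∀ (H : Type) (_ : NormedAddCommGroup H) (_ : InnerProductSpace ℂ H) (_ : CompleteSpace H)
    (π : A →⋆ₐ[ℂ] (H →L[ℂ] H)), π x = 0

end CommonDefs

section Aux

set_option linter.unusedSectionVars false

/-- Uniform norm bound for representations, coming from boundedness of the algebra. -/
lemma rep_norm_le {A : Type} [Ring A] [Algebra ℂ A] [StarRing A] [StarModule ℂ A]
    {a : A} {α : ℝ} {m : ℕ} {f : Fin m → A}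
    (h : a * star a + ∑ i, f i * star (f i) = (α : ℂ) • (1 : A))
    (H : Type) [NormedAddCommGroup H] [InnerProductSpace ℂ H] [CompleteSpace H]
    (π : A →⋆ₐ[ℂ] (H →L[ℂ] H)) : ‖π a‖ ≤ Real.sqrt α := by
  have key : ∀ v : H, ‖(star (π a)) v‖ ^ 2 ≤ α * ‖v‖ ^ 2 := by
    intro v
    have e1 : ∀ T : H →L[ℂ] H, @inner ℂ _ _ ((T * star T) v) v = ((‖star T v‖ : ℂ))^2 := by
      intro T
      rw [ContinuousLinearMap.mul_apply, ContinuousLinearMap.star_eq_adjoint,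
        ← ContinuousLinearMap.adjoint_inner_right, inner_self_eq_norm_sq_to_K]
      norm_cast
    have h' := congrArg π h
    simp only [map_add, map_mul, map_sum, map_star, map_smul, map_one] at h'
    have h2 := congrArg (fun T : H →L[ℂ] H => @inner ℂ _ _ (T v) v) h'
    simp only [ContinuousLinearMap.add_apply, ContinuousLinearMap.sum_apply,
      ContinuousLinearMap.smul_apply, ContinuousLinearMap.one_apply,
      inner_add_left, sum_inner, inner_smul_left, Complex.conj_ofReal, e1,
      inner_self_eq_norm_sq_to_K] at h2
    have h3 : ‖(star (π a)) v‖ ^ 2 + ∑ i, ‖(star (π (f i))) v‖ ^ 2 = α * ‖v‖ ^ 2 := by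
      apply Complex.ofReal_injective
      push_cast
      exact h2
    have h4 : (0:ℝ) ≤ ∑ i, ‖(star (π (f i))) v‖ ^ 2 :=
      Finset.sum_nonneg fun i _ => sq_nonneg _
    linarith
  have hb : ∀ v : H, ‖(star (π a)) v‖ ≤ Real.sqrt α * ‖v‖ := by
    intro v
    have := Real.sqrt_le_sqrt (key v)
    rwa [Real.sqrt_sq (norm_nonneg _), Real.sqrt_mul' _ (sq_nonneg ‖v‖),
      Real.sqrt_sq (norm_nonneg _)] at this
  calc ‖π a‖ = ‖star (π a)‖ := (norm_star _).symm
    _ ≤ Real.sqrt α := ContinuousLinearMap.opNorm_le_bound _ (Real.sqrt_nonneg _) hb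

variable {A : Type} [Ring A] [Algebra ℂ A] [StarRing A] [StarModule ℂ A]
variable {ι : Type} {E : ι → Type}
  [∀ i, NormedAddCommGroup (E i)] [∀ i, InnerProductSpace ℂ (E i)] [∀ i, CompleteSpace (E i)]

lemma memlp_map (π : ∀ i, A →⋆ₐ[ℂ] (E i →L[ℂ] E i)) {C : A → ℝ} (hC0 : ∀ a, 0 ≤ C a)
    (hC : ∀ a i, ‖π i a‖ ≤ C a) (a : A) (v : lp E 2) :
    Memℓp (fun i => π i a (v i)) 2 := by
  apply memℓp_gen
  have h2 : (2:ℝ≥0∞).toReal = 2 := by norm_num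
  rw [h2]
  have hsum : Summable fun i => (C a)^2 * ‖v i‖ ^ (2:ℝ) :=
    (((lp.memℓp v).summable (by norm_num)).congr (by intro i; rw [h2])).mul_left _
  apply Summable.of_nonneg_of_le (fun i => Real.rpow_nonneg (norm_nonneg _) _) _ hsum
  intro i
  have h1 : ‖π i a (v i)‖ ≤ C a * ‖v i‖ :=
    le_trans ((π i a).le_opNorm (v i))
      (mul_le_mul_of_nonneg_right (hC a i) (norm_nonneg _))
  have hle : ‖π i a (v i)‖ ^ (2:ℝ) ≤ (C a * ‖v i‖) ^ (2:ℝ) :=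
    Real.rpow_le_rpow (norm_nonneg _) h1 (by norm_num)
  refine hle.trans (le_of_eq ?_)
  rw [Real.mul_rpow (hC0 a) (norm_nonneg _)]
  congr 1
  rw [show ((2:ℝ)) = ((2:ℕ):ℝ) by norm_num, Real.rpow_natCast]

noncomputable def dsumLin (π : ∀ i, A →⋆ₐ[ℂ] (E i →L[ℂ] E i)) {C : A → ℝ}
    (hC0 : ∀ a, 0 ≤ C a) (hC : ∀ a i, ‖π i a‖ ≤ C a) (a : A) :
    lp E 2 →ₗ[ℂ] lp E 2 where
  toFun v := ⟨fun i => π i a (v i), memlp_map π hC0 hC a v⟩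
  map_add' v w := by
    apply lp.ext
    funext i
    simp only [lp.coeFn_add, Pi.add_apply]
    exact map_add _ _ _
  map_smul' c v := by
    apply lp.ext
    funext i
    simp only [lp.coeFn_smul, Pi.smul_apply, RingHom.id_apply]
    exact map_smul _ _ _

lemma dsumLin_apply (π : ∀ i, A →⋆ₐ[ℂ] (E i →L[ℂ] E i)) {C : A → ℝ}
    (hC0 : ∀ a, 0 ≤ C a) (hC : ∀ a i, ‖π i a‖ ≤ C a) (a : A) (v : lp E 2) (i : ι) :
    (dsumLin π hC0 hC a v : ∀ j, E j) i = π i a (v i) := rfl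

lemma dsumLin_norm (π : ∀ i, A →⋆ₐ[ℂ] (E i →L[ℂ] E i)) {C : A → ℝ}
    (hC0 : ∀ a, 0 ≤ C a) (hC : ∀ a i, ‖π i a‖ ≤ C a) (a : A) (v : lp E 2) :
    ‖dsumLin π hC0 hC a v‖ ≤ C a * ‖v‖ := by
  have h2 : (2:ℝ≥0∞).toReal = 2 := by norm_num
  apply lp.norm_le_of_forall_sum_le (by rw [h2]; norm_num)
    (mul_nonneg (hC0 a) (norm_nonneg v))
  intro s
  rw [h2]
  have step1 : ∀ i ∈ s, ‖(dsumLin π hC0 hC a v : ∀ j, E j) i‖ ^ (2:ℝ)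
      ≤ (C a)^2 * ‖v i‖ ^ (2:ℝ) := by
    intro i _
    rw [dsumLin_apply]
    have h1 : ‖π i a (v i)‖ ≤ C a * ‖v i‖ :=
      le_trans ((π i a).le_opNorm (v i))
        (mul_le_mul_of_nonneg_right (hC a i) (norm_nonneg _))
    have := Real.rpow_le_rpow (norm_nonneg _) h1 (by norm_num : (0:ℝ) ≤ 2)
    refine this.trans (le_of_eq ?_)
    rw [Real.mul_rpow (hC0 a) (norm_nonneg _)]
    congr 1
    rw [show ((2:ℝ)) = ((2:ℕ):ℝ) by norm_num, Real.rpow_natCast]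
  calc ∑ i ∈ s, ‖(dsumLin π hC0 hC a v : ∀ j, E j) i‖ ^ (2:ℝ)
      ≤ ∑ i ∈ s, (C a)^2 * ‖v i‖ ^ (2:ℝ) := Finset.sum_le_sum step1
    _ = (C a)^2 * ∑ i ∈ s, ‖v i‖ ^ (2:ℝ) := by rw [Finset.mul_sum]
    _ ≤ (C a)^2 * ‖v‖ ^ (2:ℝ) := by
        apply mul_le_mul_of_nonneg_left _ (sq_nonneg _)
        have := lp.sum_rpow_le_norm_rpow (by rw [h2]; norm_num : 0 < (2:ℝ≥0∞).toReal) v s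
        rwa [h2] at this
    _ = (C a * ‖v‖) ^ (2:ℝ) := by
        rw [Real.mul_rpow (hC0 a) (norm_nonneg _)]
        congr 1
        rw [show ((2:ℝ)) = ((2:ℕ):ℝ) by norm_num, Real.rpow_natCast]

noncomputable def dsumCLM (π : ∀ i, A →⋆ₐ[ℂ] (E i →L[ℂ] E i)) {C : A → ℝ}
    (hC0 : ∀ a, 0 ≤ C a) (hC : ∀ a i, ‖π i a‖ ≤ C a) (a : A) :
    lp E 2 →L[ℂ] lp E 2 :=
  LinearMap.mkContinuous (dsumLin π hC0 hC a) (C a) (dsumLin_norm π hC0 hC a)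

lemma dsumCLM_apply (π : ∀ i, A →⋆ₐ[ℂ] (E i →L[ℂ] E i)) {C : A → ℝ}
    (hC0 : ∀ a, 0 ≤ C a) (hC : ∀ a i, ‖π i a‖ ≤ C a) (a : A) (v : lp E 2) (i : ι) :
    (dsumCLM π hC0 hC a v : ∀ j, E j) i = π i a (v i) := rfl

lemma dsumCLM_star (π : ∀ i, A →⋆ₐ[ℂ] (E i →L[ℂ] E i)) {C : A → ℝ}
    (hC0 : ∀ a, 0 ≤ C a) (hC : ∀ a i, ‖π i a‖ ≤ C a) (a : A) :
    dsumCLM π hC0 hC (star a) = ContinuousLinearMap.adjoint (dsumCLM π hC0 hC a) := by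
  rw [ContinuousLinearMap.eq_adjoint_iff]
  intro v w
  rw [lp.inner_eq_tsum, lp.inner_eq_tsum]
  congr 1
  funext i
  rw [dsumCLM_apply, dsumCLM_apply, map_star, ContinuousLinearMap.star_eq_adjoint,
    ContinuousLinearMap.adjoint_inner_left]

set_option maxHeartbeats 1000000 in
/-- The direct sum of a family of uniformly bounded `*`-representations. -/
noncomputable def dsumRep (π : ∀ i, A →⋆ₐ[ℂ] (E i →L[ℂ] E i)) {C : A → ℝ}
    (hC0 : ∀ a, 0 ≤ C a) (hC : ∀ a i, ‖π i a‖ ≤ C a) :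
    A →⋆ₐ[ℂ] (lp E 2 →L[ℂ] lp E 2) where
  toFun := dsumCLM π hC0 hC
  map_one' := by
    refine ContinuousLinearMap.ext fun v => lp.ext (funext fun i => ?_)
    simp [dsumCLM_apply]
  map_mul' a b := by
    refine ContinuousLinearMap.ext fun v => lp.ext (funext fun i => ?_)
    simp [dsumCLM_apply, ContinuousLinearMap.mul_apply]
  map_zero' := by
    refine ContinuousLinearMap.ext fun v => lp.ext (funext fun i => ?_)
    simp [dsumCLM_apply]
  map_add' a b := by
    refine ContinuousLinearMap.ext fun v => lp.ext (funext fun i => ?_)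
    simp [dsumCLM_apply, ContinuousLinearMap.add_apply, lp.coeFn_add]
  commutes' c := by
    refine ContinuousLinearMap.ext fun v => lp.ext (funext fun i => ?_)
    rw [dsumCLM_apply, AlgHomClass.commutes]
    simp [Algebra.algebraMap_eq_smul_one, lp.coeFn_smul]
  map_star' a := by
    rw [ContinuousLinearMap.star_eq_adjoint]
    exact dsumCLM_star π hC0 hC a

lemma dsumRep_apply (π : ∀ i, A →⋆ₐ[ℂ] (E i →L[ℂ] E i)) {C : A → ℝ}
    (hC0 : ∀ a, 0 ≤ C a) (hC : ∀ a i, ‖π i a‖ ≤ C a) (a : A) (v : lp E 2) (i : ι) :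
    (dsumRep π hC0 hC a v : ∀ j, E j) i = π i a (v i) := rfl

end Aux

/-- A bundled `*`-representation of `A`. -/
structure RepBundle (A : Type) [Ring A] [Algebra ℂ A] [StarRing A] [StarModule ℂ A] where
  H : Type
  [i1 : NormedAddCommGroup H]
  [i2 : InnerProductSpace ℂ H]
  [i3 : CompleteSpace H]
  π : A →⋆ₐ[ℂ] (H →L[ℂ] H)

attribute [instance] RepBundle.i1 RepBundle.i2 RepBundle.i3

/-- a bounded unital complex `*`-algebra is C*-representable iff its
`*`-radical is trivial. -/
theorem cstarRepresentable_iff_starRadical_eq_bot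
    (A : Type) [Ring A] [Algebra ℂ A] [StarRing A] [StarModule ℂ A]
    (hbdd : IsBoundedStarAlgebra A) :
    CStarRepresentable A ↔ {x : A | MemStarRadical A x} = {0} := by
  classical
  constructor
  · rintro ⟨H, i1, i2, i3, π, hinj⟩
    ext x
    simp only [Set.mem_setOf_eq, Set.mem_singleton_iff]
    constructor
    · intro hx
      have := hx H i1 i2 i3 π
      apply hinj
      rw [this, map_zero]
    · rintro rfl
      intro H' i1' i2' i3' π'
      exact map_zero π'
  · intro h
    have hne : ∀ x : {y : A // y ≠ 0}, ∃ r : RepBundle A, r.π x.1 ≠ 0 := by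
      rintro ⟨x, hx⟩
      have hx' : x ∉ ({0} : Set A) := hx
      rw [← h] at hx'
      simp only [Set.mem_setOf_eq, MemStarRadical] at hx'
      push_neg at hx'
      obtain ⟨H, j1, j2, j3, π, hπ⟩ := hx'
      exact ⟨@RepBundle.mk A _ _ _ _ H j1 j2 j3 π, hπ⟩
    choose r hπ0 using hne
    set E : {y : A // y ≠ 0} → Type := fun x => (r x).H with hEdef
    set π0 : ∀ x : {y : A // y ≠ 0}, A →⋆ₐ[ℂ] (E x →L[ℂ] E x) := fun x => (r x).π
      with hπdef
    set C : A → ℝ := fun a => Real.sqrt (Classical.choose (hbdd a)) with hCdef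
    have hC0 : ∀ a, 0 ≤ C a := fun a => Real.sqrt_nonneg _
    have hC : ∀ a x, ‖π0 x a‖ ≤ C a := by
      intro a x
      obtain ⟨m, f, heq⟩ := Classical.choose_spec (hbdd a)
      exact rep_norm_le heq _ (π0 x)
    refine ⟨lp E 2, inferInstance, inferInstance, inferInstance, dsumRep π0 hC0 hC, ?_⟩
    rw [injective_iff_map_eq_zero]
    intro a ha
    by_contra hne0
    set x : {y : A // y ≠ 0} := ⟨a, hne0⟩
    have hx := hπ0 x
    have hw : ∃ w : E x, π0 x a w ≠ 0 := by
      by_contra h'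
      push_neg at h'
      exact hx (ContinuousLinearMap.ext fun w => h' w)
    obtain ⟨w, hw⟩ := hw
    have := congrArg (fun T : lp E 2 →L[ℂ] lp E 2 => (T (lp.single 2 x w) : ∀ j, E j) x) ha
    simp only [dsumRep_apply, ContinuousLinearMap.zero_apply, lp.coeFn_zero,
      Pi.zero_apply] at this
    rw [lp.single_apply_self] at this
    exact hw this
end

section
/- Let A be a bounded unital complex *-algebra and a ∈ A with a* = a. Then π(a) is a positive operator for every *-representation π of A on a complex Hilbert space if and only if for every real ε > 0 there exist x₁,…,x_n ∈ A with a + ε•1 = x₁x₁* + ⋯ + x_nx_n*. -/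
open scoped ComplexConjugate

noncomputable section AuxCone

variable {A : Type} [Ring A] [Algebra ℂ A] [StarRing A] [StarModule ℂ A]

/-- The cone of finite sums of elements `y * star y`. -/
def sqCone (A : Type) [Ring A] [Algebra ℂ A] [StarRing A] [StarModule ℂ A] : AddSubmonoid A :=
  AddSubmonoid.closure {x | ∃ y, x = y * star y}

lemma sq_mem_sqCone (y : A) : y * star y ∈ sqCone A :=
  AddSubmonoid.subset_closure ⟨y, rfl⟩

lemma star_eq_of_mem_sqCone {x : A} (hx : x ∈ sqCone A) : star x = x := by
  induction hx using AddSubmonoid.closure_induction with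
  | mem x h => obtain ⟨y, rfl⟩ := h; simp [mul_assoc]
  | zero => simp
  | add x y _ _ hx hy => rw [star_add, hx, hy]

lemma smul_mem_sqCone {r : ℝ} (hr : 0 ≤ r) {x : A} (hx : x ∈ sqCone A) :
    r • x ∈ sqCone A := by
  induction hx using AddSubmonoid.closure_induction with
  | mem x h =>
    obtain ⟨y, rfl⟩ := h
    have : r • (y * star y) = (Real.sqrt r • y) * star (Real.sqrt r • y) := by
      rw [star_smul, star_trivial (Real.sqrt r), smul_mul_smul_comm,
        Real.mul_self_sqrt hr]
    rw [this]
    exact sq_mem_sqCone _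
  | zero => simpa using zero_mem (sqCone A)
  | add x y _ _ hx hy => rw [smul_add]; exact add_mem hx hy

lemma conj_mem_sqCone {x : A} (hx : x ∈ sqCone A) (v : A) :
    star v * x * v ∈ sqCone A := by
  induction hx using AddSubmonoid.closure_induction with
  | mem x h =>
    obtain ⟨y, rfl⟩ := h
    have : star v * (y * star y) * v = (star v * y) * star (star v * y) := by
      simp [mul_assoc]
    rw [this]; exact sq_mem_sqCone _
  | zero => simpa using zero_mem (sqCone A)
  | add x y _ _ hx hy =>
    have : star v * (x + y) * v = star v * x * v + star v * y * v := by noncomm_ring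
    rw [this]; exact add_mem hx hy

lemma exists_sum_of_mem_sqCone {x : A} (hx : x ∈ sqCone A) :
    ∃ (n : ℕ) (f : Fin n → A), x = ∑ i, f i * star (f i) := by
  induction hx using AddSubmonoid.closure_induction with
  | mem x h =>
    obtain ⟨y, rfl⟩ := h
    exact ⟨1, fun _ => y, by simp⟩
  | zero => exact ⟨0, fun i => i.elim0, by simp⟩
  | add x y _ _ hx hy =>
    obtain ⟨n, f, rfl⟩ := hx
    obtain ⟨m, g, rfl⟩ := hy
    refine ⟨n + m, Fin.append f g, ?_⟩
    rw [Fin.sum_univ_add]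
    simp

lemma sum_mem_sqCone {n : ℕ} (f : Fin n → A) : ∑ i, f i * star (f i) ∈ sqCone A :=
  AddSubmonoid.sum_mem _ fun i _ => sq_mem_sqCone _

/-- Decomposition of a self-adjoint element as a difference of two squares. -/
lemma selfAdjoint_decomp {v : A} (hv : star v = v) :
    v = ((1/2 : ℂ) • (1 + v)) * star ((1/2 : ℂ) • (1 + v))
      - ((1/2 : ℂ) • (1 - v)) * star ((1/2 : ℂ) • (1 - v)) := by
  have h1 : star ((1/2 : ℂ) • (1 + v)) = (1/2 : ℂ) • (1 + v) := by
    rw [star_smul, star_add, star_one, hv]; norm_num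
  have h2 : star ((1/2 : ℂ) • (1 - v)) = (1/2 : ℂ) • (1 - v) := by
    rw [star_smul, star_sub, star_one, hv]; norm_num
  rw [h1, h2, smul_mul_smul_comm, smul_mul_smul_comm]
  rw [show (1 + v) * (1 + v) = 1 + v + v + v * v by noncomm_ring,
      show (1 - v) * (1 - v) = 1 - v - v + v * v by noncomm_ring]
  norm_num
  module

/-- Boundedness gives: every self-adjoint element is dominated by a multiple of one. -/
lemma exists_smul_one_sub_mem_sqCone (hbdd : IsBoundedStarAlgebra A)
    {v : A} (hv : star v = v) : ∃ c : ℝ, (c : ℂ) • (1 : A) - v ∈ sqCone A := by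
  set u := (1/2 : ℂ) • (1 + v) with hu
  set w := (1/2 : ℂ) • (1 - v) with hw
  obtain ⟨α, m, f, hf⟩ := hbdd u
  refine ⟨α, ?_⟩
  have hmem1 : (α : ℂ) • (1 : A) - u * star u ∈ sqCone A := by
    have h1 : (α : ℂ) • (1 : A) - u * star u = ∑ i, f i * star (f i) := by
      rw [← hf]; abel
    rw [h1]; exact sum_mem_sqCone f
  have hdecomp := selfAdjoint_decomp hv
  rw [← hu, ← hw] at hdecomp
  have key : (α : ℂ) • (1 : A) - v
      = ((α : ℂ) • (1 : A) - u * star u) + w * star w := by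
    conv_lhs => rw [hdecomp]
    abel
  rw [key]
  exact add_mem hmem1 (sq_mem_sqCone w)

lemma mem_sqCone_of_neg_one {c : ℝ} (hc : 0 < c) (h : -((c : ℂ) • (1 : A)) ∈ sqCone A) :
    ∀ v : A, star v = v → v ∈ sqCone A := by
  have hneg : ∀ z : A, -(z * star z) ∈ sqCone A := by
    intro z
    have h1 := conj_mem_sqCone h (star z)
    have e1 : star (star z) * -((c : ℂ) • (1 : A)) * star z
        = -((c : ℂ) • (z * star z)) := by
      rw [star_star]
      rw [mul_neg, neg_mul]
      congr 1
      rw [mul_smul_comm, smul_mul_assoc, mul_one]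
    rw [e1] at h1
    have h2 := smul_mem_sqCone (le_of_lt (by positivity : (0:ℝ) < 1/c)) h1
    have e2 : (1/c : ℝ) • -((c : ℂ) • (z * star z)) = -(z * star z) := by
      rw [smul_neg, Complex.coe_smul, smul_smul]
      norm_num [hc.ne']
    rwa [e2] at h2
  intro v hv
  rw [selfAdjoint_decomp hv, sub_eq_add_neg]
  exact add_mem (sq_mem_sqCone _) (hneg _)

lemma one_mem_sqCone : (1 : A) ∈ sqCone A := by
  simpa using sq_mem_sqCone (1 : A)

/-- Separation: if `b` is a self-adjoint element not in the cone (and the cone is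
"proper"), there is a real functional separating it from the cone. -/
lemma exists_separating_functional (hbdd : IsBoundedStarAlgebra A) (hone : (1 : A) ≠ 0)
    {b : A} (hb : star b = b) (hnot : b ∉ sqCone A)
    (hnd : ∀ c : ℝ, 0 < c → -((c : ℂ) • (1 : A)) ∉ sqCone A) :
    ∃ g : A →ₗ[ℝ] ℝ, (∀ q ∈ sqCone A, 0 ≤ g q) ∧ g 1 = 1 ∧ g b ≤ 0 ∧
      ∀ w : A, star w = -w → g w = 0 := by
  classical
  set s : ConvexCone ℝ A :=
    { carrier := {x | ∃ q ∈ sqCone A, ∃ r : ℝ, 0 ≤ r ∧ ∃ w, star w = -w ∧ x = q - r • b + w}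
      smul_mem' := by
        rintro c hc x ⟨q, hq, r, hr, w, hw, rfl⟩
        refine ⟨c • q, smul_mem_sqCone hc.le hq, c * r, mul_nonneg hc.le hr, c • w, ?_, ?_⟩
        · rw [star_smul, star_trivial c, hw, smul_neg]
        · rw [smul_add, smul_sub, smul_smul]
      add_mem' := by
        rintro x ⟨q1, hq1, r1, hr1, w1, hw1, rfl⟩ y ⟨q2, hq2, r2, hr2, w2, hw2, rfl⟩
        refine ⟨q1 + q2, add_mem hq1 hq2, r1 + r2, add_nonneg hr1 hr2, w1 + w2, ?_, ?_⟩
        · rw [star_add, hw1, hw2, neg_add]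
        · rw [add_smul]; abel } with hs
  have Hc : ∀ t : ℝ, t • (1 : A) = 0 → t • (1 : ℝ) = 0 := by
    intro t ht
    rcases eq_or_ne t 0 with rfl | htne
    · simp
    · exfalso
      apply hone
      calc (1 : A) = t⁻¹ • (t • (1 : A)) := by rw [smul_smul, inv_mul_cancel₀ htne, one_smul]
      _ = 0 := by rw [ht, smul_zero]
  set f := LinearPMap.mkSpanSingleton' (σ := RingHom.id ℝ) (1 : A) (1 : ℝ) Hc with hf
  have hdom : ∀ t : ℝ, t • (1 : A) ∈ f.domain := by
    intro t
    rw [hf, LinearPMap.domain_mkSpanSingleton]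
    exact Submodule.smul_mem _ t (Submodule.mem_span_singleton_self 1)
  have nonneg : ∀ x : f.domain, (x : A) ∈ s → 0 ≤ f x := by
    rintro ⟨x, hxdom⟩ hxs
    have hxdom' : x ∈ Submodule.span ℝ {(1 : A)} := by
      rwa [hf, LinearPMap.domain_mkSpanSingleton] at hxdom
    obtain ⟨t, ht⟩ := Submodule.mem_span_singleton.1 hxdom'
    have hfx : f ⟨x, hxdom⟩ = t := by
      have : f ⟨t • (1 : A), hdom t⟩ = t • (1 : ℝ) :=
        LinearPMap.mkSpanSingleton'_apply (1 : A) (1 : ℝ) Hc t _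
      simp only [smul_eq_mul, mul_one] at this
      rw [← this]
      congr 1
      exact Subtype.ext ht.symm
    rw [hfx]
    obtain ⟨q, hq, r, hr, w, hw, hxeq0⟩ := hxs
    have hxeq : t • (1 : A) = q - r • b + w := by rw [ht]; exact hxeq0
    -- w is self-adjoint and skew, hence zero
    have hwsa : star w = w := by
      have hw' : w = t • (1 : A) - q + r • b := by rw [hxeq]; abel
      rw [hw']
      rw [star_add, star_sub, star_smul, star_trivial t, star_one,
        star_eq_of_mem_sqCone hq, star_smul, star_trivial r, hb]
    have hw0 : w = 0 := by
      have h2 : (2 : ℝ) • w = 0 := by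
        rw [two_smul]
        nth_rewrite 1 [← hwsa]
        rw [hw, neg_add_cancel]
      calc w = (2⁻¹ : ℝ) • ((2 : ℝ) • w) := by rw [smul_smul]; norm_num
      _ = 0 := by rw [h2, smul_zero]
    rw [hw0, add_zero] at hxeq
    by_contra hlt
    push_neg at hlt
    have hmem : r • b ∈ sqCone A := by
      have e : r • b = q + (-t) • (1 : A) := by
        rw [neg_smul]
        rw [hxeq]
        abel
      rw [e]
      refine add_mem hq (smul_mem_sqCone (by linarith) one_mem_sqCone)
    rcases eq_or_lt_of_le hr with hr0 | hr0
    · refine hnd (-t) (by linarith) ?_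
      rw [Complex.coe_smul]
      have : q = t • (1 : A) := by rw [hxeq, ← hr0, zero_smul, sub_zero]
      rw [neg_smul, neg_neg, ← this]
      exact hq
    · apply hnot
      have h2 := smul_mem_sqCone (le_of_lt (by positivity : (0:ℝ) < 1/r)) hmem
      rwa [smul_smul, one_div, inv_mul_cancel₀ hr0.ne', one_smul] at h2
  have dense : ∀ y : A, ∃ x : f.domain, (x : A) + y ∈ s := by
    intro y
    set h := (1/2 : ℝ) • (y + star y) with hh
    have hsa : star h = h := by
      rw [hh, star_smul, star_trivial, star_add, star_star, add_comm]
    obtain ⟨c, hc⟩ := exists_smul_one_sub_mem_sqCone hbdd (v := -h)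
      (by rw [star_neg, hsa])
    rw [sub_neg_eq_add] at hc
    refine ⟨⟨c • (1 : A), hdom c⟩, (c : ℂ) • (1 : A) + h, hc, 0, le_refl 0, y - h, ?_, ?_⟩
    · rw [star_sub, hsa]
      have : star y - h = h - y := by rw [hh]; module
      rw [this, neg_sub]
    · rw [Complex.coe_smul, zero_smul, sub_zero]
      abel
  obtain ⟨g, hfg, hgs⟩ := riesz_extension (s.toPointedCone ⟨0, zero_mem _, 0, le_refl 0, 0, by simp, by simp⟩) f nonneg dense
  have hg1 : g 1 = 1 := by
    have h1 : ((1 : ℝ) • (1 : A) : A) = (1 : A) := one_smul _ _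
    have := hfg ⟨(1 : A), h1 ▸ hdom 1⟩
    rw [this]
    exact LinearPMap.mkSpanSingleton'_apply_self (1 : A) (1 : ℝ) Hc _
  have hconeS : ∀ q ∈ sqCone A, q ∈ s := by
    intro q hq
    exact ⟨q, hq, 0, le_refl 0, 0, by simp, by simp⟩
  refine ⟨g, fun q hq => hgs q (hconeS q hq), hg1, ?_, ?_⟩
  · have : -b ∈ s := ⟨0, zero_mem _, 1, zero_le_one, 0, by simp, by simp⟩
    have h0 := hgs _ this
    rw [map_neg] at h0
    linarith
  · intro w hw
    have h1 : w ∈ s := ⟨0, zero_mem _, 0, le_refl 0, w, hw, by simp⟩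
    have h2 : -w ∈ s := ⟨0, zero_mem _, 0, le_refl 0, -w, by rw [star_neg, hw, neg_neg], by simp⟩
    have := hgs _ h1
    have h3 := hgs _ h2
    rw [map_neg] at h3
    linarith

end AuxCone

set_option synthInstance.maxHeartbeats 1000000
set_option maxHeartbeats 1000000

noncomputable section AuxGNS

open UniformSpace

/-- Data for the GNS construction: a positive `*`-functional. -/
structure GNSData (A : Type) [Ring A] [Algebra ℂ A] [StarRing A] [StarModule ℂ A] : Type where
  φ : A →ₗ[ℂ] ℂ
  star_map : ∀ x, φ (star x) = starRingEnd ℂ (φ x)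
  cone_nonneg : ∀ x ∈ sqCone A, 0 ≤ RCLike.re (φ x)

variable {A : Type} [Ring A] [Algebra ℂ A] [StarRing A] [StarModule ℂ A]

/-- Star as a real-linear map. -/
def starLin : A →ₗ[ℝ] A where
  toFun := star
  map_add' := star_add
  map_smul' r x := by simp [star_smul]

/-- Symmetrization of a real functional. -/
def symm2 (g : A →ₗ[ℝ] ℝ) : A →ₗ[ℝ] ℝ := (1/2 : ℝ) • (g + g ∘ₗ starLin)

lemma symm2_apply (g : A →ₗ[ℝ] ℝ) (x : A) : symm2 g x = (1/2) * (g x + g (star x)) := by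
  simp [symm2, starLin]
  ring

lemma symm2_star (g : A →ₗ[ℝ] ℝ) (x : A) : symm2 g (star x) = symm2 g x := by
  rw [symm2_apply, symm2_apply, star_star]; ring

lemma symm2_sa (g : A →ₗ[ℝ] ℝ) {x : A} (hx : star x = x) : symm2 g x = g x := by
  rw [symm2_apply, hx]; ring

lemma symm2_Ismul (g : A →ₗ[ℝ] ℝ) (x : A) :
    symm2 g (Complex.I • star x) = - symm2 g (Complex.I • x) := by
  have h1 : Complex.I • star x = - star (Complex.I • x) := by
    rw [star_smul, Complex.star_def, Complex.conj_I, neg_smul, neg_neg]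
  rw [h1, map_neg, symm2_star]

/-- Complexification of the symmetrized functional. -/
def cExt (g : A →ₗ[ℝ] ℝ) : A →ₗ[ℂ] ℂ := LinearMap.extendTo𝕜' (𝕜 := ℂ) (symm2 g)

lemma cExt_apply (g : A →ₗ[ℝ] ℝ) (x : A) :
    cExt g x = (symm2 g x : ℂ) - Complex.I * (symm2 g (Complex.I • x) : ℂ) := by
  rw [cExt, LinearMap.extendTo𝕜', Module.Dual.extendRCLike_apply, RCLike.I_to_complex]
  norm_cast

lemma cExt_re (g : A →ₗ[ℝ] ℝ) (x : A) : RCLike.re (cExt g x) = symm2 g x := by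
  rw [cExt, LinearMap.extendTo𝕜', Module.Dual.re_extendRCLike_apply]

namespace GNSData

/-- GNS data from a real functional which is nonnegative on the cone. -/
def ofFunctional (g : A →ₗ[ℝ] ℝ) (hpos : ∀ q ∈ sqCone A, 0 ≤ g q) : GNSData A where
  φ := cExt g
  star_map x := by
    rw [cExt_apply, cExt_apply, symm2_Ismul, symm2_star]
    rw [map_sub, map_mul, Complex.conj_ofReal, Complex.conj_ofReal, Complex.conj_I]
    push_cast
    ring
  cone_nonneg x hx := by
    rw [cExt_re, symm2_sa g (star_eq_of_mem_sqCone hx)]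
    exact hpos x hx

lemma ofFunctional_re_sa (g : A →ₗ[ℝ] ℝ) (hpos : ∀ q ∈ sqCone A, 0 ≤ g q)
    {x : A} (hx : star x = x) :
    RCLike.re ((ofFunctional g hpos).φ x) = g x := by
  show RCLike.re (cExt g x) = g x
  rw [cExt_re, symm2_sa g hx]

/-- The pre-Hilbert space of the GNS construction (a type synonym for `A`). -/
@[reducible] def pre (_p : GNSData A) : Type := A

instance (p : GNSData A) : Inner ℂ p.pre := ⟨fun x y => p.φ (star (x : A) * (y : A))⟩

lemma inner_def (p : GNSData A) (x y : p.pre) :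
    (inner ℂ x y : ℂ) = p.φ (star (x : A) * (y : A)) := rfl

lemma inner_self_mem (p : GNSData A) (x : p.pre) : star (x : A) * (x : A) ∈ sqCone A := by
  have := sq_mem_sqCone (star (x : A))
  rwa [star_star] at this

instance corePre (p : GNSData A) : PreInnerProductSpace.Core ℂ p.pre where
  inner := inner ℂ
  conj_inner_symm x y := by
    rw [inner_def, inner_def, ← p.star_map, star_mul, star_star]
  re_inner_nonneg x := p.cone_nonneg _ (p.inner_self_mem x)
  add_left x y z := by
    rw [inner_def, inner_def, inner_def]
    rw [show star ((x + y : p.pre) : A) = star (x : A) + star (y : A) from star_add _ _,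
      add_mul, map_add]
  smul_left x y r := by
    rw [inner_def, inner_def]
    rw [show ((r • x : p.pre) : A) = r • (x : A) from rfl, star_smul, smul_mul_assoc,
      map_smul]
    rw [smul_eq_mul, RCLike.star_def]

instance (p : GNSData A) : SeminormedAddCommGroup p.pre :=
  InnerProductSpace.Core.toSeminormedAddCommGroup (𝕜 := ℂ)

instance (p : GNSData A) : NormedSpace ℂ p.pre :=
  InnerProductSpace.Core.toNormedSpace (𝕜 := ℂ)

instance (p : GNSData A) : InnerProductSpace ℂ p.pre where
  norm_sq_eq_re_inner x := by
    have h : ‖x‖ = Real.sqrt (RCLike.re (inner (𝕜 := ℂ) x x)) := rfl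
    rw [h, Real.sq_sqrt ((corePre p).re_inner_nonneg x)]
  conj_inner_symm := (corePre p).conj_inner_symm
  add_left := (corePre p).add_left
  smul_left := (corePre p).smul_left

/-- The GNS Hilbert space. -/
abbrev hilb (p : GNSData A) : Type := Completion (SeparationQuotient p.pre)

/-- The canonical map from the pre-Hilbert space into the GNS Hilbert space. -/
def toHilb (p : GNSData A) : p.pre →L[ℂ] p.hilb :=
  (Completion.toComplL).comp (SeparationQuotient.mkCLM ℂ p.pre)

lemma toHilb_apply (p : GNSData A) (v : p.pre) :
    p.toHilb v = ((SeparationQuotient.mk v : SeparationQuotient p.pre) : p.hilb) := rfl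

lemma denseRange_toHilb (p : GNSData A) : DenseRange ⇑p.toHilb := by
  have h : ⇑p.toHilb = ((↑) : SeparationQuotient p.pre → p.hilb) ∘ SeparationQuotient.mk := by
    funext v; rfl
  rw [h]
  exact Completion.denseRange_coe.comp SeparationQuotient.surjective_mk.denseRange
    (Completion.continuous_coe _)

lemma inner_toHilb (p : GNSData A) (u v : p.pre) :
    (inner ℂ (p.toHilb u) (p.toHilb v) : ℂ) = p.φ (star (u : A) * (v : A)) := by
  rw [toHilb_apply, toHilb_apply, Completion.inner_coe, SeparationQuotient.inner_mk_mk,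
    inner_def]

/-- Extensionality from density. -/
lemma op_ext (p : GNSData A) {T S : p.hilb →L[ℂ] p.hilb}
    (h : ∀ v : p.pre, T (p.toHilb v) = S (p.toHilb v)) : T = S :=
  ContinuousLinearMap.ext fun x =>
    (p.denseRange_toHilb).induction_on x (isClosed_eq T.continuous S.continuous) h

/-- Left multiplication as a linear map on the pre-Hilbert space. -/
def mulLin (p : GNSData A) (b : A) : p.pre →ₗ[ℂ] p.pre where
  toFun v := (b * (v : A) : A)
  map_add' x y := mul_add b x y
  map_smul' c x := mul_smul_comm c b x

/-- Existence of the GNS operators. -/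
lemma exists_op (p : GNSData A) (hbdd : IsBoundedStarAlgebra A) (b : A) :
    ∃ T : p.hilb →L[ℂ] p.hilb, ∀ v : p.pre, T (p.toHilb v) = p.toHilb (p.mulLin b v) := by
  obtain ⟨α, m, f, hf⟩ := hbdd (star b)
  rw [star_star] at hf
  set q : A := ∑ i, f i * star (f i) with hq
  have hqmem : q ∈ sqCone A := sum_mem_sqCone f
  have hbb : star b * b = (α : ℂ) • (1 : A) - q := by rw [← hf]; abel
  have hbound : ∀ v : p.pre, ‖p.mulLin b v‖ ≤ Real.sqrt (max α 0) * ‖v‖ := by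
    intro v
    have h1 : ‖p.mulLin b v‖ ^ 2 ≤ max α 0 * ‖v‖ ^ 2 := by
      rw [norm_sq_eq_re_inner (𝕜 := ℂ), norm_sq_eq_re_inner (𝕜 := ℂ)]
      have e0 : ((p.mulLin b v : p.pre) : A) = b * (v : A) := rfl
      have e : star ((p.mulLin b v : p.pre) : A) * ((p.mulLin b v : p.pre) : A)
          = (α : ℂ) • (star (v : A) * (v : A)) - star (v : A) * q * (v : A) := by
        rw [e0, star_mul]
        calc star (v : A) * star b * (b * (v : A))
            = star (v : A) * (star b * b) * (v : A) := by rw [mul_assoc, mul_assoc, mul_assoc]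
          _ = (α : ℂ) • (star (v : A) * (v : A)) - star (v : A) * q * (v : A) := by
              rw [hbb, mul_sub, sub_mul, mul_smul_comm, smul_mul_assoc, mul_one]
      rw [inner_def, inner_def, e, map_sub, map_smul]
      have h2 : 0 ≤ RCLike.re (p.φ (star (v : A) * q * (v : A))) :=
        p.cone_nonneg _ (conj_mem_sqCone hqmem (v : A))
      have h3 : 0 ≤ RCLike.re (p.φ (star (v : A) * (v : A))) :=
        p.cone_nonneg _ (p.inner_self_mem v)
      have h4 : RCLike.re ((α : ℂ) • p.φ (star (v : A) * (v : A))
            - p.φ (star (v : A) * q * (v : A)))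
          = α * RCLike.re (p.φ (star (v : A) * (v : A)))
            - RCLike.re (p.φ (star (v : A) * q * (v : A))) := by
        simp [smul_eq_mul]
      rw [h4]
      have h5 : α * RCLike.re (p.φ (star (v : A) * (v : A)))
          ≤ max α 0 * RCLike.re (p.φ (star (v : A) * (v : A))) :=
        mul_le_mul_of_nonneg_right (le_max_left α 0) h3
      linarith
    have h6 : ‖p.mulLin b v‖ ≤ Real.sqrt (max α 0 * ‖v‖ ^ 2) := by
      rw [← Real.sqrt_sq (norm_nonneg (p.mulLin b v : p.pre))]
      exact Real.sqrt_le_sqrt h1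
    rwa [Real.sqrt_mul (le_max_right α 0), Real.sqrt_sq (norm_nonneg v)] at h6
  set T0 : p.pre →L[ℂ] p.pre := LinearMap.mkContinuous (p.mulLin b) _ hbound with hT0
  have hT0app : ∀ v : p.pre, T0 v = p.mulLin b v := fun _ => rfl
  set T1 : SeparationQuotient p.pre →L[ℂ] SeparationQuotient p.pre :=
    ((SeparationQuotient.mkCLM ℂ p.pre).comp T0).comp (SeparationQuotient.outCLM ℂ p.pre)
    with hT1
  have hT1app : ∀ v : p.pre, T1 (SeparationQuotient.mk v)
      = SeparationQuotient.mk (p.mulLin b v) := by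
    intro v
    have hout : SeparationQuotient.mk (SeparationQuotient.outCLM ℂ p.pre
        (SeparationQuotient.mk v)) = SeparationQuotient.mk v :=
      SeparationQuotient.mk_outCLM _ _
    have hins : Inseparable (SeparationQuotient.outCLM ℂ p.pre (SeparationQuotient.mk v)) v :=
      SeparationQuotient.mk_eq_mk.1 hout
    have hins2 := (hins.map T0.continuous)
    calc T1 (SeparationQuotient.mk v)
        = SeparationQuotient.mk (T0 (SeparationQuotient.outCLM ℂ p.pre
            (SeparationQuotient.mk v))) := rfl
      _ = SeparationQuotient.mk (T0 v) := SeparationQuotient.mk_eq_mk.2 hins2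
      _ = SeparationQuotient.mk (p.mulLin b v) := by rw [hT0app]
  have hdr : DenseRange ⇑(Completion.toComplL :
      SeparationQuotient p.pre →L[ℂ] Completion (SeparationQuotient p.pre)) := by
    rw [Completion.coe_toComplL]
    exact Completion.denseRange_coe
  have hui : IsUniformInducing ⇑(Completion.toComplL :
      SeparationQuotient p.pre →L[ℂ] Completion (SeparationQuotient p.pre)) := by
    rw [Completion.coe_toComplL]
    exact Completion.isUniformInducing_coe _
  set j : SeparationQuotient p.pre →L[ℂ] Completion (SeparationQuotient p.pre) :=
    Completion.toComplL with hj
  refine ⟨(j.comp T1).extend j, ?_⟩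
  intro v
  calc ((j.comp T1).extend j) (p.toHilb v)
      = ((j.comp T1).extend j) (j (SeparationQuotient.mk v)) := rfl
    _ = (j.comp T1) (SeparationQuotient.mk v) := ContinuousLinearMap.extend_eq _ hdr hui _
    _ = j (T1 (SeparationQuotient.mk v)) := rfl
    _ = j (SeparationQuotient.mk (p.mulLin b v)) := by rw [hT1app]
    _ = p.toHilb (p.mulLin b v) := rfl

/-- The GNS operators, via choice. -/
def opFun (p : GNSData A) (hbdd : IsBoundedStarAlgebra A) (x : A) : p.hilb →L[ℂ] p.hilb :=
  (p.exists_op hbdd x).choose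

lemma opFun_apply (p : GNSData A) (hbdd : IsBoundedStarAlgebra A) (x : A) (v : p.pre) :
    p.opFun hbdd x (p.toHilb v) = p.toHilb ((x * v : A) : p.pre) :=
  (p.exists_op hbdd x).choose_spec v

/-- The GNS representation. -/
def rep (p : GNSData A) (hbdd : IsBoundedStarAlgebra A) :
    A →⋆ₐ[ℂ] (p.hilb →L[ℂ] p.hilb) where
  toFun := p.opFun hbdd
  map_one' := p.op_ext fun v => by
    rw [opFun_apply, ContinuousLinearMap.one_apply]
    show p.toHilb ((1 : A) * v) = p.toHilb v
    rw [one_mul]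
  map_mul' x y := p.op_ext fun v => by
    rw [ContinuousLinearMap.mul_apply, opFun_apply, opFun_apply, opFun_apply]
    show p.toHilb (x * y * v) = p.toHilb (x * (y * v))
    rw [mul_assoc]
  map_zero' := p.op_ext fun v => by
    rw [opFun_apply, ContinuousLinearMap.zero_apply]
    show p.toHilb ((0 : A) * v) = 0
    rw [zero_mul, map_zero]
  map_add' x y := p.op_ext fun v => by
    rw [ContinuousLinearMap.add_apply, opFun_apply, opFun_apply, opFun_apply]
    show p.toHilb ((x + y) * v) = p.toHilb (x * v) + p.toHilb (y * v)
    rw [add_mul, map_add]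
  commutes' c := p.op_ext fun v => by
    rw [opFun_apply]
    show p.toHilb (algebraMap ℂ A c * v)
      = (algebraMap ℂ (p.hilb →L[ℂ] p.hilb) c) (p.toHilb v)
    rw [Algebra.algebraMap_eq_smul_one, Algebra.algebraMap_eq_smul_one, smul_mul_assoc,
      one_mul, map_smul, ContinuousLinearMap.smul_apply, ContinuousLinearMap.one_apply]
  map_star' x := by
    show p.opFun hbdd (star x) = star (p.opFun hbdd x)
    rw [ContinuousLinearMap.star_eq_adjoint, ContinuousLinearMap.eq_adjoint_iff]
    intro u w
    refine DenseRange.induction_on₂ p.denseRange_toHilb ?_ ?_ u w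
    · apply isClosed_eq
      · exact Continuous.inner ((p.opFun hbdd (star x)).continuous.comp continuous_fst)
          continuous_snd
      · exact Continuous.inner continuous_fst ((p.opFun hbdd x).continuous.comp continuous_snd)
    · intro u v
      rw [opFun_apply, opFun_apply]
      show (inner ℂ (p.toHilb (star x * u)) (p.toHilb v) : ℂ)
        = inner ℂ (p.toHilb u) (p.toHilb (x * v))
      rw [p.inner_toHilb, p.inner_toHilb, star_mul, star_star, mul_assoc]

lemma rep_apply (p : GNSData A) (hbdd : IsBoundedStarAlgebra A) (x : A) (v : p.pre) :
    p.rep hbdd x (p.toHilb v) = p.toHilb ((x * v : A) : p.pre) :=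
  opFun_apply p hbdd x v

end GNSData

end AuxGNS

/-- in a bounded unital complex `*`-algebra, a self-adjoint `a` is positive in every
`*`-representation iff `a + ε•1` is a sum of elements `xᵢxᵢ*` for every real `ε > 0`. -/
theorem starRep_positive_iff_approx_sum_squares
    (A : Type) [Ring A] [Algebra ℂ A] [StarRing A] [StarModule ℂ A]
    (hbdd : IsBoundedStarAlgebra A) (a : A) (ha : star a = a) :
    (∀ (H : Type) (_ : NormedAddCommGroup H) (_ : InnerProductSpace ℂ H) (_ : CompleteSpace H)
        (π : A →⋆ₐ[ℂ] (H →L[ℂ] H)), (π a).IsPositive) ↔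
      ∀ ε : ℝ, 0 < ε → ∃ (n : ℕ) (f : Fin n → A),
        a + (ε : ℂ) • (1 : A) = ∑ i, f i * star (f i) := by
  constructor
  · intro hpos ε hε
    by_cases hone : (1 : A) = 0
    · refine ⟨0, fun i => i.elim0, ?_⟩
      have hall : ∀ x : A, x = 0 := fun x => by rw [← mul_one x, hone, mul_zero]
      rw [hall (a + (ε : ℂ) • 1)]; simp
    set b : A := a + (ε : ℂ) • (1 : A) with hbdef
    have hbsa : star b = b := by
      rw [hbdef, star_add, ha, star_smul, star_one, Complex.star_def, Complex.conj_ofReal]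
    by_cases hnd : ∃ c : ℝ, 0 < c ∧ -((c : ℂ) • (1 : A)) ∈ sqCone A
    · obtain ⟨c, hc, hcm⟩ := hnd
      exact exists_sum_of_mem_sqCone (mem_sqCone_of_neg_one hc hcm b hbsa)
    push_neg at hnd
    by_contra hns
    have hbnot : b ∉ sqCone A := fun h => hns (exists_sum_of_mem_sqCone h)
    obtain ⟨g, hgpos, hg1, hgb, hgskew⟩ :=
      exists_separating_functional hbdd hone hbsa hbnot hnd
    set p : GNSData A := GNSData.ofFunctional g hgpos with hp
    set π : A →⋆ₐ[ℂ] (p.hilb →L[ℂ] p.hilb) := p.rep hbdd with hπ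
    have hppos := hpos p.hilb inferInstance inferInstance inferInstance π
    have h2 : (0:ℝ) ≤ RCLike.re (inner ℂ (π a (p.toHilb (1 : A))) (p.toHilb (1 : A)) : ℂ) :=
      hppos.2 (p.toHilb (1 : A))
    have h3 : π a (p.toHilb (1 : A)) = p.toHilb a := by
      rw [hπ, p.rep_apply hbdd a (1 : A)]
      show p.toHilb (a * 1) = p.toHilb a
      rw [mul_one]
    rw [h3, p.inner_toHilb] at h2
    have h4 : star a * 1 = a := by rw [ha, mul_one]
    rw [h4] at h2
    have hga : g a ≤ -ε := by
      have hgb' : g b = g a + ε := by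
        rw [hbdef, map_add, Complex.coe_smul, map_smul, hg1, smul_eq_mul, mul_one]
      linarith
    have h5 : RCLike.re (p.φ a) = g a := GNSData.ofFunctional_re_sa g hgpos ha
    rw [h5] at h2
    linarith
  · intro h H _ _ _ π
    constructor
    · have hsa : IsSelfAdjoint (π a) := by
        show star (π a) = π a
        rw [← map_star, ha]
      exact hsa.isSymmetric
    · intro ξ
      show 0 ≤ RCLike.re (inner ℂ (π a ξ) ξ : ℂ)
      set c : ℝ := RCLike.re (inner ℂ (π a ξ) ξ : ℂ) with hc
      set s : ℝ := ‖ξ‖ ^ 2 with hs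
      have key : ∀ ε : ℝ, 0 < ε → 0 ≤ c + ε * s := by
        intro ε hε
        obtain ⟨n, f, hf⟩ := h ε hε
        have happ : π a + (ε : ℂ) • (1 : H →L[ℂ] H) = ∑ i, π (f i) * star (π (f i)) := by
          have h0 := congrArg π hf
          rw [map_add, map_smul, map_one, map_sum] at h0
          refine h0.trans (Finset.sum_congr rfl fun i _ => ?_)
          rw [map_mul, map_star]
        have h1 : RCLike.re (inner ℂ ((π a + (ε : ℂ) • (1 : H →L[ℂ] H)) ξ) ξ : ℂ) = c + ε * s := by
          rw [ContinuousLinearMap.add_apply, ContinuousLinearMap.smul_apply,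
            ContinuousLinearMap.one_apply, inner_add_left, inner_smul_left, map_add,
            Complex.conj_ofReal, hs]
          simp [inner_self_eq_norm_sq (𝕜 := ℂ), hc, RCLike.re_to_complex]
          exact Or.inl (by rw [← Complex.ofReal_pow, Complex.ofReal_re])
        have h2 : 0 ≤ RCLike.re (inner ℂ ((∑ i, π (f i) * star (π (f i))) ξ) ξ : ℂ) := by
          rw [ContinuousLinearMap.sum_apply, sum_inner, map_sum]
          refine Finset.sum_nonneg fun i _ => ?_
          rw [ContinuousLinearMap.mul_apply, ContinuousLinearMap.star_eq_adjoint,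
            ← ContinuousLinearMap.adjoint_inner_right]
          exact inner_self_nonneg
        rw [happ] at h1
        rw [h1] at h2
        exact h2
      by_contra hcneg
      push_neg at hcneg
      have hs0 : 0 ≤ s := by rw [hs]; positivity
      have hp1 : (0:ℝ) < s + 1 := by linarith
      have hk := key (-c / (s + 1)) (by apply div_pos <;> linarith)
      have heq : c + -c / (s + 1) * s = c / (s + 1) := by field_simp; ring
      rw [heq] at hk
      have : c / (s + 1) < 0 := div_neg_of_neg_of_pos hcneg hp1
      linarith
end

section
/- Let A be a complex *-algebra, let q be a real number with 0 < q < 1, and let a ∈ A satisfy a*a = q•(aa*). Then π(a) = 0 for every *-representation π of A on a complex Hilbert space. -/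
/-- if `a* a = q • (a a*)` with `0 < q < 1` in a complex `*`-algebra, then
`π(a) = 0` in every `*`-representation. -/
theorem starRep_eq_zero_of_qCommutation
    (A : Type) [Ring A] [Algebra ℂ A] [StarRing A] [StarModule ℂ A]
    (q : ℝ) (hq0 : 0 < q) (hq1 : q < 1) (a : A)
    (ha : star a * a = (q : ℂ) • (a * star a)) :
    ∀ (H : Type) (_ : NormedAddCommGroup H) (_ : InnerProductSpace ℂ H) (_ : CompleteSpace H)
      (π : A →⋆ₐ[ℂ] (H →L[ℂ] H)), π a = 0 := by
  intro H _ _ _ π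
  set T := π a with hT
  have key : star T * T = (q : ℂ) • (T * star T) := by
    have := congrArg π ha
    simp only [map_smul, map_mul, map_star] at this; simpa [hT] using this
  have hnorm : ‖T‖ * ‖T‖ = q * (‖T‖ * ‖T‖) := by
    calc ‖T‖ * ‖T‖ = ‖star T * T‖ := (CStarRing.norm_star_mul_self).symm
      _ = ‖(q : ℂ) • (T * star T)‖ := by rw [key]
      _ = q * ‖T * star T‖ := by
          rw [norm_smul, Complex.norm_real, Real.norm_of_nonneg hq0.le]
      _ = q * (‖T‖ * ‖T‖) := by rw [CStarRing.norm_self_mul_star]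
  have h0 : ‖T‖ * ‖T‖ = 0 := by nlinarith
  have : ‖T‖ = 0 := by nlinarith [norm_nonneg T]
  exact norm_eq_zero.mp this
end
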